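/- The functions f_J for J ⊆ X with |J| ≥ 2, where f_J(A) = 1 if J ∩ A ≠ ∅ and 0 otherwise, are linearly independent as vectors in ℝ^(2^X); there are 2^n − n − 1 of them when |X| = n. -/
import Mathlib

open Finset

variable (α : Type*) [Fintype α] [DecidableEq α]

/-- `f_J(A) = 1` if `J ∩ A ≠ ∅`, else `0`. -/
def fJ (J : Finset α) : Finset α → ℝ := fun A => if (J ∩ A).Nonempty then 1 else 0

/-- The functions `f_J` for `|J| ≥ 2` are linearly independent, and there are
`2^n − n − 1` of them. -/
theorem fJ_linearIndependent :
    LinearIndependent ℝ (fun J : {J : Finset α // 2 ≤ J.card} => fJ α J.1) ∧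
    Fintype.card {J : Finset α // 2 ≤ J.card} =
      2 ^ Fintype.card α - Fintype.card α - 1 := by
  constructor
  · rw [Fintype.linearIndependent_iff]
    intro g hg
    set c : Finset α → ℝ := fun J => if h : 2 ≤ J.card then g ⟨J, h⟩ else 0 with hc
    have hA : ∀ A : Finset α, ∑ J : Finset α, c J * fJ α J A = 0 := by
      intro A
      have h1 : ∑ J : {J : Finset α // 2 ≤ J.card}, g J * fJ α J.1 A = 0 := by
        have := congrFun hg A
        simpa [Finset.sum_apply] using this
      calc ∑ J : Finset α, c J * fJ α J A
          = ∑ J ∈ univ.filter (fun J : Finset α => 2 ≤ J.card), c J * fJ α J A := by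
            rw [Finset.sum_filter]
            apply Finset.sum_congr rfl
            intro J _
            by_cases h : 2 ≤ J.card <;> simp [hc, h]
        _ = ∑ J : {J : Finset α // 2 ≤ J.card}, c J.1 * fJ α J.1 A := by
            exact Finset.sum_subtype _ (by simp) _
        _ = 0 := by
            rw [← h1]; apply Finset.sum_congr rfl; intro J _; simp [hc, J.2]
    have h3 : ∀ J B : Finset α, fJ α J Bᶜ = 1 - (if J ⊆ B then 1 else 0) := by
      intro J B
      have : (J ∩ Bᶜ).Nonempty ↔ ¬ J ⊆ B := by
        rw [← not_iff_not, Finset.not_nonempty_iff_eq_empty,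
          ← Finset.disjoint_iff_inter_eq_empty, disjoint_compl_right_iff,
          Finset.le_iff_subset, not_not]
      by_cases h : J ⊆ B <;> simp [fJ, this, h]
    have hpow : ∀ B : Finset α, ∑ J ∈ B.powerset, c J = ∑ J : Finset α, c J := by
      intro B
      have h2 := hA Bᶜ
      simp only [h3, mul_sub, mul_one] at h2
      rw [Finset.sum_sub_distrib, sub_eq_zero] at h2
      rw [h2]
      rw [show B.powerset = univ.filter (fun J => J ⊆ B) from by ext J; simp,
        Finset.sum_filter]
      apply Finset.sum_congr rfl
      intro J _
      by_cases h : J ⊆ B <;> simp [h]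
    have hS : ∑ J : Finset α, c J = 0 := by
      have := hpow ∅
      simpa [hc] using this.symm
    have hzero : ∀ B : Finset α, c B = 0 := by
      intro B
      induction B using Finset.strongInduction with
      | _ B ih =>
        have h4 : ∑ J ∈ B.powerset, c J = 0 := by rw [hpow, hS]
        rw [← Finset.add_sum_erase _ _ (Finset.mem_powerset_self B)] at h4
        have h5 : ∑ J ∈ B.powerset.erase B, c J = 0 := by
          apply Finset.sum_eq_zero
          intro J hJ
          rw [Finset.mem_erase, Finset.mem_powerset] at hJ
          exact ih J (lt_of_le_of_ne hJ.2 hJ.1)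
        linarith
    intro J
    have := hzero J.1
    simpa [hc, J.2] using this
  · rw [Fintype.card_subtype]
    have h0 : (univ : Finset (Finset α)).filter (fun J => ¬ 2 ≤ J.card) =
        (univ : Finset α).powersetCard 0 ∪ (univ : Finset α).powersetCard 1 := by
      ext J
      simp only [Finset.mem_filter, Finset.mem_univ, true_and, Finset.mem_union,
        Finset.mem_powersetCard_univ]
      omega
    have hdisj : Disjoint ((univ : Finset α).powersetCard 0)
        ((univ : Finset α).powersetCard 1) := by
      rw [Finset.disjoint_left]
      intro J h1 h2
      rw [Finset.mem_powersetCard_univ] at h1 h2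
      omega
    have hneg : ((univ : Finset (Finset α)).filter (fun J => ¬ 2 ≤ J.card)).card =
        Fintype.card α + 1 := by
      rw [h0, Finset.card_union_of_disjoint hdisj, Finset.card_powersetCard,
        Finset.card_powersetCard, Finset.card_univ]
      simp [Nat.choose_one_right]
      omega
    have hsplit := Finset.card_filter_add_card_filter_not
      (s := (univ : Finset (Finset α))) (p := fun J => 2 ≤ J.card)
    rw [hneg, Finset.card_univ, Fintype.card_finset] at hsplit
    omega
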